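/- Let TS be a semantic labeled transition system with total transition relation, and fix a k-safety specification φ̂ given by ψ, (ξ i), φ. Then there exists D : Schedule → (Fin k → S) → Prop satisfying (KD1) ∀ s̄, (∀ i, s̄ i ∈ Init) → ψ s̄ → ∃ M, ¬ D M s̄; (KD2) ∀ M s̄, Bad s̄ → D M s̄; (KD3) ∀ M s̄, ¬(M is valid for s̄) → D M s̄; (KD4) ∀ M s̄ s̄' ℓ̄, (∀ M', D M' s̄') → s̄ ↝[M,ℓ̄] s̄' → D M s̄, if and only if TS ⊨ φ̂. -/

import Mathlib

/-- A semantic labeled transition system with a total transition relation. -/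
structure LTS (S L : Type*) where
  Init : Set S
  Tr : S → L → S → Prop
  total : ∀ s, ∃ ℓ s', Tr s ℓ s'

/-- `t` is a trace of `T` starting from `s`. -/
def LTS.IsTrace {S L : Type*} (T : LTS S L) (t : ℕ → S) (s : S) : Prop :=
  t 0 = s ∧ ∀ n, ∃ ℓ, T.Tr (t n) ℓ (t (n + 1))

/-- The trace `t` has at least `j + 1` observation points with respect to `ξ`. -/
def HasObsUpTo {S : Type*} (ξ : S → Prop) (t : ℕ → S) (j : ℕ) : Prop :=
  ∃ f : Fin (j + 1) → ℕ, StrictMono f ∧ ∀ i, ξ (t (f i))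

/-- The `j`-th observation state of the trace `t` with respect to `ξ`:
`t n_j` where `n_j` is the `j`-th smallest element of `{n | ξ (t n)}`. -/
noncomputable def obsState {S : Type*} (ξ : S → Prop) (t : ℕ → S) (j : ℕ) : S :=
  t (Nat.nth (fun n => ξ (t n)) j)

/-- `TS ⊨ φ̂` for the `k`-safety specification given by `ψ`, `ξ`, `φ`. -/
def kSafetyModels {S L : Type*} (T : LTS S L) {k : ℕ} (ψ : (Fin k → S) → Prop)
    (ξ : Fin k → S → Prop) (φ : (Fin k → S) → Prop) : Prop :=
  ∀ sb : Fin k → S, (∀ i, sb i ∈ T.Init) → ψ sb →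
    ∀ t : Fin k → ℕ → S, (∀ i, T.IsTrace (t i) (sb i)) →
      ∀ j : ℕ, (∀ i, HasObsUpTo (ξ i) (t i) j) →
        φ (fun i => obsState (ξ i) (t i) j)

/-- `s̄ ↝[M,ℓ̄] s̄'`: the composed step with schedule `M` and labels `ℓ̄`. -/
def ComposedStep {S L : Type*} (T : LTS S L) {k : ℕ} (M : Set (Fin k)) (ℓ : Fin k → L)
    (sb sb' : Fin k → S) : Prop :=
  (∀ i ∈ M, T.Tr (sb i) (ℓ i) (sb' i)) ∧ ∀ i ∉ M, sb' i = sb i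

/-- `M` is a valid schedule for the composed state `s̄`. -/
def ValidSched {S : Type*} {k : ℕ} (ξ : Fin k → S → Prop) (M : Set (Fin k))
    (sb : Fin k → S) : Prop :=
  (∀ i ∈ M, ¬ ξ i (sb i)) ∨ (M = Set.univ ∧ ∀ i, ξ i (sb i))

/-- `Bad s̄`: all traces are at observation points but `φ` fails. -/
def BadState {S : Type*} {k : ℕ} (ξ : Fin k → S → Prop) (φ : (Fin k → S) → Prop)
    (sb : Fin k → S) : Prop :=
  (∀ i, ξ i (sb i)) ∧ ¬ φ sb

/-- A schedule: a nonempty subset of `Fin k`. -/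
def Sched (k : ℕ) := {M : Set (Fin k) // M.Nonempty}


open Classical in
private lemma count_congr' {p q : ℕ → Prop} [DecidablePred p] [DecidablePred q] :
    ∀ {n : ℕ}, (∀ m < n, (p m ↔ q m)) → Nat.count p n = Nat.count q n := by
  intro n
  induction n with
  | zero => intro; simp
  | succ n ih =>
    intro h
    rw [Nat.count_succ, Nat.count_succ, ih (fun m hm => h m (by omega))]
    by_cases hp : p n
    · rw [if_pos hp, if_pos ((h n (by omega)).1 hp)]
    · rw [if_neg hp, if_neg (fun hq => hp ((h n (by omega)).2 hq))]

private lemma count_le_card' {p : ℕ → Prop} [DecidablePred p] (hf : (setOf p).Finite)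
    (n : ℕ) : Nat.count p n ≤ hf.toFinset.card := by
  rw [Nat.count_eq_card_filter_range]
  apply Finset.card_le_card
  intro x hx
  rw [Finset.mem_filter] at hx
  exact hf.mem_toFinset.2 hx.2

private lemma exists_trace' {S L : Type*} (T : LTS S L) (s : S) : ∃ t, T.IsTrace t s := by
  classical
  have next : ∀ x : S, ∃ x' : S, ∃ ℓ, T.Tr x ℓ x' := by
    intro x; obtain ⟨ℓ, x', h⟩ := T.total x; exact ⟨x', ℓ, h⟩
  refine ⟨fun n => (fun x => Classical.choose (next x))^[n] s, rfl, fun n => ?_⟩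
  show ∃ ℓ, T.Tr _ ℓ ((fun x => Classical.choose (next x))^[n+1] s)
  rw [Function.iterate_succ_apply']
  obtain ⟨ℓ, h⟩ := Classical.choose_spec (next ((fun x => Classical.choose (next x))^[n] s))
  exact ⟨ℓ, h⟩

private lemma splice' {S L : Type*} {T : LTS S L} {t w : ℕ → S} {pos : ℕ}
    (h0 : ∀ n < pos, ∃ ℓ, T.Tr (t n) ℓ (t (n + 1))) (hw : T.IsTrace w (t pos)) :
    ∃ u : ℕ → S, T.IsTrace u (t 0) ∧ ∀ n ≤ pos, u n = t n := by
  classical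
  refine ⟨fun n => if n < pos then t n else w (n - pos), ⟨?_, ?_⟩, ?_⟩
  · by_cases h : 0 < pos
    · simp [h]
    · have hpos : pos = 0 := by omega
      simp [hpos, hw.1]
  · intro n
    by_cases h1 : n + 1 < pos
    · simpa [h1, show n < pos by omega] using h0 n (by omega)
    · by_cases h2 : n < pos
      · have : n + 1 = pos := by omega
        simpa [h1, h2, this, hw.1] using h0 n h2
      · have e1 : n - pos + 1 = n + 1 - pos := by omega
        simpa [h1, h2, ← e1] using hw.2 (n - pos)
  · intro n hn
    by_cases h : n < pos
    · simp [h]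
    · have : n = pos := by omega
      simp [this, hw.1]

theorem kSafety_chc_encoding {S L : Type*} (T : LTS S L) {k : ℕ} (hk : 1 ≤ k)
    (ψ : (Fin k → S) → Prop) (ξ : Fin k → S → Prop) (φ : (Fin k → S) → Prop) :
    (∃ D : Sched k → (Fin k → S) → Prop,
      (∀ sb, (∀ i, sb i ∈ T.Init) → ψ sb → ∃ M, ¬ D M sb) ∧
      (∀ (M : Sched k) sb, BadState ξ φ sb → D M sb) ∧
      (∀ (M : Sched k) sb, ¬ ValidSched ξ M.val sb → D M sb) ∧
      (∀ (M : Sched k) sb sb' ℓ, (∀ M', D M' sb') →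
        ComposedStep T M.val ℓ sb sb' → D M sb)) ↔
    kSafetyModels T ψ ξ φ := by
  constructor
  · classical
    rintro ⟨D, hKD1, hKD2, hKD3, hKD4⟩
    intro sb hInit hψ t ht j hObs
    by_contra hφ
    -- next observation point exists while count ≤ j
    have hnext : ∀ (i : Fin k) (n : ℕ), Nat.count (fun m => ξ i (t i m)) n ≤ j →
        ∃ m, n ≤ m ∧ ξ i (t i m) := by
      intro i n hc
      by_contra h
      push_neg at h
      obtain ⟨f, hfmono, hfobs⟩ := hObs i
      have hflt : ∀ r : Fin (j + 1), f r < n := by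
        intro r
        by_contra hge
        exact h (f r) (by omega) (hfobs r)
      have hcard : (Finset.univ : Finset (Fin (j + 1))).card ≤
          ((Finset.range n).filter (fun m => ξ i (t i m))).card :=
        Finset.card_le_card_of_injOn (fun r : Fin (j + 1) => f r)
          (fun r _ => Finset.mem_filter.2 ⟨Finset.mem_range.2 (hflt r), hfobs r⟩)
          (fun a _ b _ hab => hfmono.injective hab)
      rw [Finset.card_univ, Fintype.card_fin, ← Nat.count_eq_card_filter_range] at hcard
      omega
    have hnxt_mem : ∀ (i : Fin k) (n : ℕ), Nat.count (fun m => ξ i (t i m)) n ≤ j →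
        n ≤ sInf {m | n ≤ m ∧ ξ i (t i m)} ∧ ξ i (t i (sInf {m | n ≤ m ∧ ξ i (t i m)})) := by
      intro i n hc
      have hne : {m | n ≤ m ∧ ξ i (t i m)}.Nonempty := by
        obtain ⟨m, hm1, hm2⟩ := hnext i n hc
        exact ⟨m, hm1, hm2⟩
      exact Nat.sInf_mem hne
    have hnxt_eq : ∀ (i : Fin k) (n : ℕ), ¬ ξ i (t i n) →
        sInf {m | n + 1 ≤ m ∧ ξ i (t i m)} = sInf {m | n ≤ m ∧ ξ i (t i m)} := by
      intro i n hpn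
      have hseteq : {m | n + 1 ≤ m ∧ ξ i (t i m)} = {m | n ≤ m ∧ ξ i (t i m)} := by
        ext m
        constructor
        · rintro ⟨h1, h2⟩; exact ⟨by omega, h2⟩
        · rintro ⟨h1, h2⟩
          refine ⟨?_, h2⟩
          have : n ≠ m := by rintro rfl; exact hpn h2
          omega
      rw [hseteq]
    -- Lemma A: from a synchronized state, reach a fully-at-observation state
    have stepA : ∀ c, c ≤ j → ∀ r (nb : Fin k → ℕ),
        (∀ i, Nat.count (fun m => ξ i (t i m)) (nb i) = c) →
        (∑ i, (sInf {m | nb i ≤ m ∧ ξ i (t i m)} - nb i)) ≤ r →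
        (∃ M, ¬ D M (fun i => t i (nb i))) →
        ∃ nb' : Fin k → ℕ, (∀ i, Nat.count (fun m => ξ i (t i m)) (nb' i) = c) ∧
          (∀ i, ξ i (t i (nb' i))) ∧ (∃ M, ¬ D M (fun i => t i (nb' i))) := by
      intro c hcj r
      induction r with
      | zero =>
        intro nb hcount hsum hex
        refine ⟨nb, hcount, fun i => ?_, hex⟩
        have h1 := hnxt_mem i (nb i) (by rw [hcount i]; exact hcj)
        have h2 : sInf {m | nb i ≤ m ∧ ξ i (t i m)} - nb i = 0 :=
          Finset.sum_eq_zero_iff.1 (le_antisymm hsum (Nat.zero_le _)) i (Finset.mem_univ i)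
        have h3 : sInf {m | nb i ≤ m ∧ ξ i (t i m)} = nb i := by omega
        rw [h3] at h1
        exact h1.2
      | succ r IH =>
        intro nb hcount hsum hex
        by_cases hall : ∀ i, ξ i (t i (nb i))
        · exact ⟨nb, hcount, hall, hex⟩
        · obtain ⟨M, hM⟩ := hex
          have hvalid : ValidSched ξ M.val (fun i => t i (nb i)) := by
            by_contra hnv
            exact hM (hKD3 M _ hnv)
          rcases hvalid with hv | ⟨_, hv⟩
          · obtain ⟨i0, hi0⟩ := M.2
            have hl : ∀ i : Fin k, ∃ ℓ, T.Tr (t i (nb i)) ℓ (t i (nb i + 1)) :=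
              fun i => (ht i).2 (nb i)
            have hstep : ComposedStep T M.val (fun i => Classical.choose (hl i))
                (fun i => t i (nb i))
                (fun i => t i (if i ∈ M.val then nb i + 1 else nb i)) := by
              constructor
              · intro i hi
                simp only [if_pos hi]
                exact Classical.choose_spec (hl i)
              · intro i hi
                simp only [if_neg hi]
            have hex' : ∃ M', ¬ D M' (fun i => t i (if i ∈ M.val then nb i + 1 else nb i)) := by
              by_contra h
              push_neg at h
              exact hM (hKD4 M _ _ _ h hstep)
            have hcount' : ∀ i, Nat.count (fun m => ξ i (t i m))
                (if i ∈ M.val then nb i + 1 else nb i) = c := by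
              intro i
              by_cases hi : i ∈ M.val
              · rw [if_pos hi, Nat.count_succ, if_neg (hv i hi), hcount i]
                omega
              · rw [if_neg hi, hcount i]
            have hterm : ∀ i ∈ M.val,
                sInf {m | nb i + 1 ≤ m ∧ ξ i (t i m)} - (nb i + 1)
                  = (sInf {m | nb i ≤ m ∧ ξ i (t i m)} - nb i) - 1 ∧
                1 ≤ sInf {m | nb i ≤ m ∧ ξ i (t i m)} - nb i := by
              intro i hi
              have h1 := hnxt_mem i (nb i) (by rw [hcount i]; exact hcj)
              have h2 := hnxt_eq i (nb i) (hv i hi)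
              have h3 : sInf {m | nb i ≤ m ∧ ξ i (t i m)} ≠ nb i := by
                intro he
                rw [he] at h1
                exact hv i hi h1.2
              have h4 := h1.1
              rw [h2]
              omega
            have hsum' : (∑ i, (sInf {m | (if i ∈ M.val then nb i + 1 else nb i) ≤ m ∧
                ξ i (t i m)} - (if i ∈ M.val then nb i + 1 else nb i))) < ∑ i,
                (sInf {m | nb i ≤ m ∧ ξ i (t i m)} - nb i) := by
              apply Finset.sum_lt_sum ?_ ⟨i0, Finset.mem_univ i0, ?_⟩
              · intro i _
                by_cases hi : i ∈ M.val
                · simp only [if_pos hi]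
                  rw [(hterm i hi).1]
                  omega
                · simp only [if_neg hi]
                  exact le_rfl
              · simp only [if_pos hi0]
                rw [(hterm i0 hi0).1]
                have := (hterm i0 hi0).2
                omega
            refine IH (fun i => if i ∈ M.val then nb i + 1 else nb i) hcount' ?_ hex'
            show (∑ i, (sInf {m | (if i ∈ M.val then nb i + 1 else nb i) ≤ m ∧
              ξ i (t i m)} - (if i ∈ M.val then nb i + 1 else nb i))) ≤ r
            omega
          · exact absurd (fun i => hv i) hall
    -- main: advance the synchronized observation count up to j
    have main : ∀ m c, c + m = j → ∀ nb : Fin k → ℕ,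
        (∀ i, Nat.count (fun m => ξ i (t i m)) (nb i) = c) →
        (∃ M, ¬ D M (fun i => t i (nb i))) → False := by
      intro m
      induction m with
      | zero =>
        intro c hc nb hcount hex
        obtain ⟨nb', hcount', hall', M, hM⟩ := stepA c (by omega) _ nb hcount le_rfl hex
        have hobs_eq : (fun i => obsState (ξ i) (t i) j) = fun i => t i (nb' i) := by
          funext i
          unfold obsState
          congr 1
          have h1 : Nat.nth (fun m => ξ i (t i m))
              (Nat.count (fun m => ξ i (t i m)) (nb' i)) = nb' i := Nat.nth_count (hall' i)
          rw [hcount'] at h1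
          rw [show c = j by omega] at h1
          exact h1
        exact hM (hKD2 M _ ⟨hall', fun h => hφ (hobs_eq ▸ h)⟩)
      | succ m IH =>
        intro c hc nb hcount hex
        obtain ⟨nb', hcount', hall', M, hM⟩ := stepA c (by omega) _ nb hcount le_rfl hex
        have hvalid : ValidSched ξ M.val (fun i => t i (nb' i)) := by
          by_contra hnv
          exact hM (hKD3 M _ hnv)
        rcases hvalid with hv | ⟨hMuniv, _⟩
        · obtain ⟨i0, hi0⟩ := M.2
          exact absurd (hall' i0) (hv i0 hi0)
        · have hl : ∀ i : Fin k, ∃ ℓ, T.Tr (t i (nb' i)) ℓ (t i (nb' i + 1)) :=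
            fun i => (ht i).2 (nb' i)
          have hstep : ComposedStep T M.val (fun i => Classical.choose (hl i))
              (fun i => t i (nb' i)) (fun i => t i (nb' i + 1)) := by
            constructor
            · intro i _
              exact Classical.choose_spec (hl i)
            · intro i hi
              exact absurd (hMuniv ▸ Set.mem_univ i) hi
          have hex' : ∃ M', ¬ D M' (fun i => t i (nb' i + 1)) := by
            by_contra h
            push_neg at h
            exact hM (hKD4 M _ _ _ h hstep)
          have hcount'' : ∀ i, Nat.count (fun m => ξ i (t i m)) (nb' i + 1) = c + 1 := by
            intro i
            rw [Nat.count_succ, if_pos (hall' i), hcount' i]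
          exact IH (c + 1) (by omega) (fun i => nb' i + 1) hcount'' hex'
    obtain ⟨M0, hM0⟩ := hKD1 sb hInit hψ
    have h0 : (fun i => t i 0) = sb := funext fun i => (ht i).1
    exact main j 0 (by omega) (fun _ => 0) (fun i => Nat.count_zero _)
      ⟨M0, by rw [h0]; exact hM0⟩
  · intro hmod
    classical
    set R : (Fin k → S) → (Fin k → S) → Prop := fun a b =>
      ∃ N : Set (Fin k), N.Nonempty ∧ ValidSched ξ N a ∧ ∃ ℓ, ComposedStep T N ℓ a b with hR
    have hvs : ∀ sbv : Fin k → S, ∃ M : Sched k, ValidSched ξ M.val sbv := by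
      intro sbv
      by_cases h : ∀ i, ξ i (sbv i)
      · exact ⟨⟨Set.univ, ⟨⟨0, hk⟩, Set.mem_univ _⟩⟩, Or.inr ⟨rfl, h⟩⟩
      · push_neg at h
        obtain ⟨i0, hi0⟩ := h
        refine ⟨⟨{i0}, ⟨i0, rfl⟩⟩, Or.inl ?_⟩
        intro i hi
        rw [Set.mem_singleton_iff] at hi
        rw [hi]
        exact hi0
    refine ⟨fun M sbv => ¬ (ValidSched ξ M.val sbv ∧
        ∀ b, Relation.ReflTransGen R sbv b → ¬ BadState ξ φ b), ?_, ?_, ?_, ?_⟩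
    · -- KD1
      intro sb hInit hψ
      obtain ⟨M, hMv⟩ := hvs sb
      refine ⟨M, not_not.2 ⟨hMv, ?_⟩⟩
      intro b hreach hbad
      -- extract synchronized trace prefixes from the reachability derivation
      have key : ∀ a b : Fin k → S, Relation.ReflTransGen R a b →
          ∃ (u : Fin k → ℕ → S) (pos : Fin k → ℕ) (c : ℕ),
            (∀ i, u i 0 = a i) ∧
            (∀ i, ∀ n < pos i, ∃ ℓ, T.Tr (u i n) ℓ (u i (n + 1))) ∧
            (∀ i, ∀ n, pos i ≤ n → u i n = b i) ∧
            (∀ i, Nat.count (fun m => ξ i (u i m)) (pos i) = c) := by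
        intro a b hreach
        induction hreach with
        | refl =>
          exact ⟨fun i _ => a i, fun _ => 0, 0, fun i => rfl,
            fun i n hn => absurd hn (Nat.not_lt_zero n), fun i n _ => rfl, fun i => Nat.count_zero _⟩
        | tail hr hstep IH =>
          rename_i mid fin
          obtain ⟨u, pos, c, hu0, hustep, huconst, hucount⟩ := IH
          obtain ⟨N, hN, hNv, ℓ, hstep⟩ := hstep
          have hmid : ∀ i, u i (pos i) = mid i := fun i => huconst i (pos i) le_rfl
          refine ⟨fun i => if i ∈ N then (fun n => if n ≤ pos i then u i n else fin i) else u i,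
            fun i => if i ∈ N then pos i + 1 else pos i,
            if (∀ i, ξ i (mid i)) then c + 1 else c, ?_, ?_, ?_, ?_⟩
          · intro i
            by_cases hi : i ∈ N
            · simp only [if_pos hi, if_pos (Nat.zero_le (pos i))]
              exact hu0 i
            · simp only [if_neg hi]
              exact hu0 i
          · intro i n hn
            by_cases hi : i ∈ N
            · simp only [if_pos hi] at hn ⊢
              by_cases h1 : n < pos i
              · rw [if_pos h1.le, if_pos (show n + 1 ≤ pos i from h1)]
                exact hustep i n h1
              · have hnp : n = pos i := by omega
                rw [if_pos (by omega : n ≤ pos i), if_neg (by omega : ¬ n + 1 ≤ pos i), hnp,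
                  hmid i]
                exact ⟨ℓ i, hstep.1 i hi⟩
            · simp only [if_neg hi] at hn ⊢
              exact hustep i n hn
          · intro i n hn
            by_cases hi : i ∈ N
            · simp only [if_pos hi] at hn ⊢
              rw [if_neg (by omega)]
            · simp only [if_neg hi] at hn ⊢
              rw [huconst i n hn, hstep.2 i hi]
          · intro i
            by_cases hi : i ∈ N
            · simp only [if_pos hi]
              have hc1 : Nat.count (fun m => ξ i (if m ≤ pos i then u i m else fin i))
                  (pos i) = c := by
                rw [count_congr' (q := fun m => ξ i (u i m))
                  (fun m hm => by rw [if_pos hm.le])]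
                exact hucount i
              rw [Nat.count_succ, hc1, if_pos le_rfl, hmid i]
              rcases hNv with hv | ⟨hNuniv, hv⟩
              · rw [if_neg (hv i hi), if_neg (fun hall => hv i hi (hall i))]
                omega
              · rw [if_pos (hv i), if_pos hv]
            · simp only [if_neg hi]
              rcases hNv with hv | ⟨hNuniv, hv⟩
              · obtain ⟨i0, hi0⟩ := hN
                rw [if_neg (fun hall => hv i0 hi0 (hall i0))]
                exact hucount i
              · exact absurd (hNuniv ▸ Set.mem_univ i) hi
      obtain ⟨u, pos, c, hu0, hustep, huconst, hucount⟩ := key sb b hreach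
      have hext : ∀ i, ∃ v : ℕ → S, T.IsTrace v (sb i) ∧ ∀ n ≤ pos i, v n = u i n := by
        intro i
        obtain ⟨w, hw⟩ := exists_trace' T (u i (pos i))
        obtain ⟨v, hv1, hv2⟩ := splice' (fun n hn => hustep i n hn) hw
        rw [hu0 i] at hv1
        exact ⟨v, hv1, hv2⟩
      choose v hv1 hv2 using hext
      have hvpos : ∀ i, v i (pos i) = b i := fun i => by
        rw [hv2 i (pos i) le_rfl, huconst i (pos i) le_rfl]
      have hvobs : ∀ i, ξ i (v i (pos i)) := fun i => by
        rw [hvpos i]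
        exact hbad.1 i
      have hvcount : ∀ i, Nat.count (fun m => ξ i (v i m)) (pos i) = c := by
        intro i
        rw [count_congr' (q := fun m => ξ i (u i m))
          (fun m hm => by rw [hv2 i m hm.le])]
        exact hucount i
      have hcard : ∀ i, ∀ hf : (setOf (fun m => ξ i (v i m))).Finite,
          c + 1 ≤ hf.toFinset.card := by
        intro i hf
        have h1 : Nat.count (fun m => ξ i (v i m)) (pos i + 1) = c + 1 := by
          rw [Nat.count_succ, if_pos (hvobs i), hvcount i]
        have h2 := count_le_card' hf (pos i + 1)
        omega
      have hobs : ∀ i, HasObsUpTo (ξ i) (v i) c := by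
        intro i
        refine ⟨fun r => Nat.nth (fun m => ξ i (v i m)) r, ?_, ?_⟩
        · intro r1 r2 hlt
          refine Nat.nth_lt_nth' (show (r1 : ℕ) < (r2 : ℕ) from hlt) (fun hf => ?_)
          have := hcard i hf
          have := r2.isLt
          exact lt_of_lt_of_le (by omega : (r2 : ℕ) < c + 1) (hcard i hf)
        · intro r
          show ξ i (v i (Nat.nth (fun m => ξ i (v i m)) r))
          refine Nat.nth_mem (p := fun m => ξ i (v i m)) r (fun hf => ?_)
          have := hcard i hf
          have := r.isLt
          exact lt_of_lt_of_le (by omega : (r : ℕ) < c + 1) (hcard i hf)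
      have hfinal := hmod sb hInit hψ v hv1 c hobs
      have hbeq : (fun i => obsState (ξ i) (v i) c) = b := by
        funext i
        unfold obsState
        have h1 : Nat.nth (fun m => ξ i (v i m))
            (Nat.count (fun m => ξ i (v i m)) (pos i)) = pos i := Nat.nth_count (hvobs i)
        rw [hvcount i] at h1
        rw [h1]
        exact hvpos i
      rw [hbeq] at hfinal
      exact hbad.2 hfinal
    · -- KD2
      intro M sbv hbad h
      exact h.2 sbv Relation.ReflTransGen.refl hbad
    · -- KD3
      intro M sbv hnv hpair
      exact hnv hpair.1
    · -- KD4
      intro M sbv sbv' ℓ hall hstep hpair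
      obtain ⟨M', hM'v⟩ := hvs sbv'
      exact hall M' ⟨hM'v, fun b hr hb =>
        hpair.2 b (Relation.ReflTransGen.head ⟨M.val, M.2, hpair.1, ℓ, hstep⟩ hr) hb⟩
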